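/- For every p with 1/2 < p < 1, the limit W(p) := lim_{n→∞} w_{n,p} exists and satisfies p ≤ W(p) < 1. -/

import Mathlib

noncomputable def w (p : ℝ) : ℕ → ℝ
  | 0 => 1
  | n + 1 =>
    p ^ (n + 1) +
      ∑ j ∈ (Finset.Icc 1 n).attach,
        ((n + 1).choose j.1 : ℝ) * p ^ (n + 1 - j.1) * (1 - p) ^ j.1 *
          (Finset.Icc j.1 n).attach.sup'
            (Finset.attach_nonempty_iff.mpr
              (Finset.nonempty_Icc.mpr (Finset.mem_Icc.mp j.2).2))
            (fun m => w p m.1)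
  decreasing_by
    exact Nat.lt_succ_of_le (Finset.mem_Icc.mp m.2).2


lemma w_one (p : ℝ) : w p 1 = p := by
  rw [w]
  rw [Finset.sum_eq_zero (fun x _ => absurd (Finset.mem_Icc.mp x.2) (by omega))]
  ring

lemma binom_id (p : ℝ) (n : ℕ) :
    ∑ j ∈ Finset.Icc 1 n, ((n + 1).choose j : ℝ) * p ^ (n + 1 - j) * (1 - p) ^ j
      = 1 - p ^ (n + 1) - (1 - p) ^ (n + 1) := by
  have h := add_pow (1 - p) p (n + 1)
  simp only [sub_add_cancel, one_pow] at h
  rw [Finset.sum_range_succ, Finset.sum_range_succ'] at h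
  have hre : ∑ i ∈ Finset.range n, (1 - p) ^ (i + 1) * p ^ (n + 1 - (i + 1)) * ((n + 1).choose (i + 1) : ℝ)
      = ∑ j ∈ Finset.Icc 1 n, ((n + 1).choose j : ℝ) * p ^ (n + 1 - j) * (1 - p) ^ j := by
    apply Finset.sum_nbij' (fun i => i + 1) (fun j => j - 1)
    · intro a ha; simp only [Finset.mem_range] at ha; simp only [Finset.mem_Icc]; omega
    · intro a ha; simp only [Finset.mem_Icc] at ha; simp only [Finset.mem_range]; omega
    · intro a _; omega
    · intro a ha; simp only [Finset.mem_Icc] at ha; omega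
    · intro a _; ring
  rw [hre] at h
  simp only [Nat.choose_zero_right, Nat.choose_self, Nat.cast_one, pow_zero, Nat.sub_self] at h
  rw [Nat.sub_zero] at h
  generalize ∑ j ∈ Finset.Icc 1 n, ((n + 1).choose j : ℝ) * p ^ (n + 1 - j) * (1 - p) ^ j = S at h ⊢
  ring_nf at h ⊢
  linarith

lemma w_rec (p : ℝ) (n : ℕ) (hmono : ∀ m, 1 ≤ m → m ≤ n → w p m ≤ w p n) :
    w p (n + 1) = p ^ (n + 1) + (1 - p ^ (n + 1) - (1 - p) ^ (n + 1)) * w p n := by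
  rw [w]
  congr 1
  have hsum : ∀ j ∈ (Finset.Icc 1 n).attach,
      ((n + 1).choose j.1 : ℝ) * p ^ (n + 1 - j.1) * (1 - p) ^ j.1 *
          (Finset.Icc j.1 n).attach.sup'
            (Finset.attach_nonempty_iff.mpr
              (Finset.nonempty_Icc.mpr (Finset.mem_Icc.mp j.2).2))
            (fun m => w p m.1)
      = ((n + 1).choose j.1 : ℝ) * p ^ (n + 1 - j.1) * (1 - p) ^ j.1 * w p n := by
    intro j _
    congr 1
    apply le_antisymm
    · apply Finset.sup'_le
      intro m _
      have hm := Finset.mem_Icc.mp m.2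
      have hj := Finset.mem_Icc.mp j.2
      exact hmono m.1 (le_trans hj.1 hm.1) hm.2
    · have hj := Finset.mem_Icc.mp j.2
      exact Finset.le_sup' (fun m => w p m.1)
        (Finset.mem_attach _ ⟨n, Finset.mem_Icc.mpr ⟨hj.2, le_refl n⟩⟩)
  rw [Finset.sum_congr rfl hsum]
  rw [← Finset.sum_mul (f := fun j : {x // x ∈ Finset.Icc 1 n} =>
        ((n + 1).choose j.1 : ℝ) * p ^ (n + 1 - j.1) * (1 - p) ^ j.1)]
  rw [Finset.sum_attach (Finset.Icc 1 n)
        (fun j => ((n + 1).choose j : ℝ) * p ^ (n + 1 - j) * (1 - p) ^ j)]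
  rw [binom_id]

lemma w_prop (p : ℝ) (hp : 1/2 < p) (hp1 : p < 1) : ∀ n, 1 ≤ n →
    0 < w p n ∧ w p n < 1 ∧ (1 - p) ^ n * w p n ≤ p ^ n * (1 - w p n) ∧
      ∀ k, 1 ≤ k → k ≤ n → w p k ≤ w p n := by
  have hp0 : (0:ℝ) < p := by linarith
  have hq0 : (0:ℝ) < 1 - p := by linarith
  have hqp : 1 - p ≤ p := by linarith
  intro n hn
  induction n, hn using Nat.le_induction with
  | base =>
    rw [w_one]
    refine ⟨hp0, hp1, by nlinarith, ?_⟩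
    intro k hk1 hk2
    have : k = 1 := by omega
    rw [this, w_one]
  | succ n hn ih =>
    obtain ⟨hpos, hlt, hD, hmono⟩ := ih
    have hrec := w_rec p n hmono
    have hPle : p ^ (n+1) ≤ p := by
      calc p ^ (n+1) ≤ p ^ 1 := pow_le_pow_of_le_one hp0.le hp1.le (by omega)
        _ = p := pow_one p
    have hQle : (1-p) ^ (n+1) ≤ 1 - p := by
      calc (1-p) ^ (n+1) ≤ (1-p) ^ 1 := pow_le_pow_of_le_one hq0.le (by linarith) (by omega)
        _ = 1 - p := pow_one _
    have hPpos : (0:ℝ) < p ^ (n+1) := pow_pos hp0 _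
    have hQpos : (0:ℝ) < (1-p) ^ (n+1) := pow_pos hq0 _
    have ha : 0 ≤ 1 - p ^ (n+1) - (1-p) ^ (n+1) := by linarith
    -- key : (1-p)^(n+1) * w_n ≤ p^(n+1) * (1 - w_n)
    have hkey : (1-p) ^ (n+1) * w p n ≤ p ^ (n+1) * (1 - w p n) := by
      have h1 : (1-p) * ((1-p) ^ n * w p n) ≤ (1-p) * (p ^ n * (1 - w p n)) :=
        mul_le_mul_of_nonneg_left hD hq0.le
      have h2 : (1-p) * (p ^ n * (1 - w p n)) ≤ p * (p ^ n * (1 - w p n)) :=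
        mul_le_mul_of_nonneg_right hqp (mul_nonneg (pow_nonneg hp0.le n) (by linarith))
      calc (1-p) ^ (n+1) * w p n = (1-p) * ((1-p) ^ n * w p n) := by ring
        _ ≤ p * (p ^ n * (1 - w p n)) := le_trans h1 h2
        _ = p ^ (n+1) * (1 - w p n) := by ring
    have hstep : w p n ≤ w p (n+1) := by nlinarith [hrec, hkey]
    have hpos' : 0 < w p (n+1) := lt_of_lt_of_le hpos hstep
    have hlt' : w p (n+1) < 1 := by nlinarith [hrec, ha, hQpos, hlt]
    refine ⟨hpos', hlt', ?_, ?_⟩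
    · -- D at n+1
      have h3 : (1 - p^(n+1) - (1-p)^(n+1)) * ((1-p)^(n+1) * w p n)
          ≤ (1 - p^(n+1) - (1-p)^(n+1)) * (p^(n+1) * (1 - w p n)) :=
        mul_le_mul_of_nonneg_left hkey ha
      have e1 : w p (n+1+1) = p ^ (n+2) + (1 - p^(n+2) - (1-p)^(n+2)) * w p (n+1) := by
        apply w_rec
        intro m hm1 hm2
        rcases Nat.lt_or_ge m (n+1) with h | h
        · exact le_trans (hmono m hm1 (by omega)) hstep
        · have : m = n+1 := by omega
          rw [this]
      nlinarith [hrec, h3]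
    · intro k hk1 hk2
      rcases Nat.lt_or_ge k (n+1) with h | h
      · exact le_trans (hmono k hk1 (by omega)) hstep
      · have : k = n+1 := by omega
        rw [this]

theorem above_limit_exists (p : ℝ) (hp : 1/2 < p) (hp1 : p < 1) :
    ∃ W : ℝ, Filter.Tendsto (w p) Filter.atTop (nhds W) ∧ p ≤ W ∧ W < 1 := by
  have hp0 : (0:ℝ) < p := by linarith
  have hq0 : (0:ℝ) < 1 - p := by linarith
  have H := w_prop p hp hp1
  have gmono : ∀ k l, 1 ≤ k → k ≤ l → w p k ≤ w p l := fun k l hk hkl =>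
    (H l (hk.trans hkl)).2.2.2 k hk hkl
  have hv_mono : Monotone (fun n => w p (n+1)) :=
    monotone_nat_of_le_succ fun n => gmono (n+1) (n+2) (by omega) (by omega)
  have hbdd : BddAbove (Set.range fun n => w p (n+1)) := by
    refine ⟨1, ?_⟩
    rintro x ⟨n, rfl⟩
    exact ((H (n+1) (by omega)).2.1).le
  set W := ⨆ n, w p (n+1) with hW
  have hten : Filter.Tendsto (fun n => w p (n+1)) Filter.atTop (nhds W) :=
    tendsto_atTop_ciSup hv_mono hbdd
  refine ⟨W, (Filter.tendsto_add_atTop_iff_nat 1).mp hten, ?_, ?_⟩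
  · have := le_ciSup hbdd 0
    simpa [w_one] using this
  · -- W < 1
    obtain ⟨n0, hn0⟩ := exists_pow_lt_of_lt_one hq0 hp1
    set m := n0 + 1 with hm
    have hm1 : 1 ≤ m := by omega
    have hpm : p ^ (m+1) < 1 - p :=
      lt_of_le_of_lt (le_trans (pow_le_pow_of_le_one hp0.le hp1.le (by omega)) (le_refl _)) hn0
    have em_pos : 0 < 1 - w p m := by linarith [(H m hm1).2.1]
    -- invariant
    have inv : ∀ N, m ≤ N →
        (1 - w p m) * ((1-p) - p^(m+1) + p^(N+1)) ≤ (1-p) * (1 - w p N) := by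
      intro N hN
      induction N, hN using Nat.le_induction with
      | base => nlinarith [em_pos]
      | succ N hN ih =>
        have hN1 : 1 ≤ N := le_trans hm1 hN
        have hrec := w_rec p N (fun k hk1 hk2 => gmono k N hk1 hk2)
        have hwN0 : 0 < w p N := (H N hN1).1
        have hwN1 : w p N < 1 := (H N hN1).2.1
        have hmN : w p m ≤ w p N := gmono m N hm1 hN
        have hQ : (0:ℝ) < (1-p)^(N+1) := pow_pos hq0 _
        have hP : (0:ℝ) < p^(N+1) := pow_pos hp0 _
        have c1 : 0 ≤ (1-p) * (1-p)^(N+1) * w p N := by positivity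
        have c2 : 0 ≤ (1-p) * p^(N+1) * ((1 - w p m) - (1 - w p N)) := by
          apply mul_nonneg (by positivity); linarith
        have hq2 : (1-p) * p^(N+1) = p^(N+1) - p^(N+1+1) := by ring
        nlinarith [hrec, ih, c1, c2]
    have hδ : 0 < (1 - w p m) * ((1-p) - p^(m+1)) / (1-p) := by
      apply div_pos (mul_pos em_pos (by linarith)) hq0
    set δ := (1 - w p m) * ((1-p) - p^(m+1)) / (1-p) with hδdef
    have hbound : ∀ N, m ≤ N → w p N ≤ 1 - δ := by
      intro N hN
      have h1 := inv N hN
      have hP : (0:ℝ) < p^(N+1) := pow_pos hp0 _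
      have h2 : (1 - w p m) * ((1-p) - p^(m+1)) ≤ (1-p) * (1 - w p N) := by
        nlinarith [em_pos, hP]
      have h3 : (1 - w p m) * ((1-p) - p^(m+1)) / (1-p) ≤ 1 - w p N :=
        (div_le_iff₀ hq0).mpr (by nlinarith [h2])
      rw [hδdef]
      linarith
    have hWle : W ≤ 1 - δ := by
      apply le_of_tendsto hten
      filter_upwards [Filter.eventually_ge_atTop m] with n hn
      exact hbound (n+1) (by omega)
    linarith
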